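/- arXiv:1703.07293 — 4 statements merged into one kernel-verified Lean document; each statement's English description precedes it below -/
import Mathlib

section
/- Let v be a C^1 solution of the steady incompressible Euler equations v·∇v + ∇p = 0, div v = 0 in R^2. Then v is a shear flow (everywhere parallel to some fixed unit vector) if and only if the pressure p is constant. -/
open Real Set Filter MeasureTheory

noncomputable section

/-- The Euclidean plane. -/
abbrev V2 : Type := EuclideanSpace ℝ (Fin 2)

/-- Build a point of the plane from two coordinates. -/
def mk2 (a b : ℝ) : V2 := (WithLp.equiv 2 (Fin 2 → ℝ)).symm ![a, b]

/-- Partial derivative of a scalar function in direction `i`. -/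
def pd (i : Fin 2) (f : V2 → ℝ) (x : V2) : ℝ := fderiv ℝ f x (EuclideanSpace.single i 1)

/-- Partial derivative of a vector field in direction `i`. -/
def pdv (i : Fin 2) (v : V2 → V2) (x : V2) : V2 := fderiv ℝ v x (EuclideanSpace.single i 1)

/-- The steady incompressible Euler equations `v·∇v + ∇p = 0`, `div v = 0` in the plane. -/
def IsEuler (v : V2 → V2) (p : V2 → ℝ) : Prop :=
  (∀ x, (v x 0) • pdv 0 v x + (v x 1) • pdv 1 v x + gradient p x = 0) ∧
  (∀ x, pdv 0 v x 0 + pdv 1 v x 1 = 0)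

/-- The line through two points of the plane. -/
def lineThrough (x y : V2) : Set V2 := {z | ∃ t : ℝ, z = x + t • (y - x)}

lemma two_decomp (w : V2) :
    (w 0) • (EuclideanSpace.single (0:Fin 2) (1:ℝ)) + (w 1) • EuclideanSpace.single 1 1 = w := by
  ext i; fin_cases i <;> simp [EuclideanSpace.single_apply]

lemma fderiv_apply_decomp (v : V2 → V2) (x : V2) (w : V2) :
    fderiv ℝ v x w = w 0 • pdv 0 v x + w 1 • pdv 1 v x := by
  rw [pdv, pdv, ← (fderiv ℝ v x).map_smul, ← (fderiv ℝ v x).map_smul,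
    ← (fderiv ℝ v x).map_add, two_decomp]

lemma line_const_core (v : V2 → V2) (hv : ContDiff ℝ 1 v)
    (hA : ∀ x, fderiv ℝ v x (v x) = 0) (x u : V2) (hu : u = v x ∨ u = -(v x))
    (T : ℝ) (hT : 0 ≤ T) : v (x + T • u) = v x := by
  set γ : ℝ → V2 := fun s => x + s • u with hγ
  set φ : ℝ → V2 := fun s => v (γ s) - v x with hφ
  set f' : ℝ → V2 := fun s => fderiv ℝ v (γ s) u with hf'
  have hvd : Differentiable ℝ v := hv.differentiable one_ne_zero
  have hγc : Continuous γ := by continuity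
  have hderiv : ∀ s : ℝ, HasDerivAt φ (f' s) s := by
    intro s
    have h1 : HasDerivAt γ u s := by
      simpa [hγ] using ((hasDerivAt_id s).smul_const u).const_add x
    have h2 : HasDerivAt (fun t => v (γ t)) (fderiv ℝ v (γ s) u) s :=
      (hvd (γ s)).hasFDerivAt.comp_hasDerivAt s h1
    exact h2.sub_const (v x)
  have hgc : ContinuousOn (fun s : ℝ => ‖fderiv ℝ v (γ s)‖) (Icc 0 T) :=
    (((hv.continuous_fderiv one_ne_zero).comp hγc).norm).continuousOn
  obtain ⟨s₀, _, hK⟩ := isCompact_Icc.exists_isMaxOn (nonempty_Icc.2 hT) hgc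
  set K := ‖fderiv ℝ v (γ s₀)‖ with hKdef
  have hbound : ∀ s ∈ Ico 0 T, ‖f' s‖ ≤ K * ‖φ s‖ + 0 := by
    intro s hs
    have hvγ : v (γ s) = v x + φ s := by simp [hφ]
    have key : ‖f' s‖ = ‖fderiv ℝ v (γ s) (φ s)‖ := by
      rcases hu with hu | hu
      · have : f' s = -(fderiv ℝ v (γ s) (φ s)) := by
          have : u = v (γ s) - φ s := by rw [hvγ, hu]; abel
          rw [hf']; simp only
          rw [this, map_sub, hA (γ s), zero_sub]
        rw [this, norm_neg]
      · have : f' s = fderiv ℝ v (γ s) (φ s) := by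
          have : u = φ s - v (γ s) := by rw [hvγ, hu]; abel
          rw [hf']; simp only
          rw [this, map_sub, hA (γ s), sub_zero]
        rw [this]
    rw [key, add_zero]
    calc ‖fderiv ℝ v (γ s) (φ s)‖ ≤ ‖fderiv ℝ v (γ s)‖ * ‖φ s‖ :=
          (fderiv ℝ v (γ s)).le_opNorm (φ s)
      _ ≤ K * ‖φ s‖ := by
          apply mul_le_mul_of_nonneg_right _ (norm_nonneg _)
          exact hK ⟨hs.1, hs.2.le⟩
  have hcont : ContinuousOn φ (Icc 0 T) :=
    ((hvd.continuous.comp hγc).sub continuous_const).continuousOn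
  have h0 : ‖φ 0‖ ≤ 0 := by simp [hφ, hγ]
  have := norm_le_gronwallBound_of_norm_deriv_right_le hcont
    (fun s _ => (hderiv s).hasDerivWithinAt) h0 hbound T (right_mem_Icc.2 hT)
  rw [gronwallBound_ε0_δ0] at this
  have : φ T = 0 := norm_le_zero_iff.1 this
  have := sub_eq_zero.1 this
  simpa [hγ] using this

lemma line_const (v : V2 → V2) (hv : ContDiff ℝ 1 v)
    (hA : ∀ x, fderiv ℝ v x (v x) = 0) (x : V2) (t : ℝ) : v (x + t • v x) = v x := by
  rcases le_or_gt 0 t with ht | ht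
  · exact line_const_core v hv hA x (v x) (Or.inl rfl) t ht
  · have : x + t • v x = x + (-t) • (-(v x)) := by module
    rw [this]
    exact line_const_core v hv hA x (-(v x)) (Or.inr rfl) (-t) (by linarith)

theorem stmt_1 (v : V2 → V2) (p : V2 → ℝ) (hv : ContDiff ℝ 1 v) (hp : ContDiff ℝ 1 p)
    (h : IsEuler v p) :
    (∃ e : V2, ‖e‖ = 1 ∧ ∀ x, ∃ c : ℝ, v x = c • e) ↔ (∃ c : ℝ, ∀ x, p x = c) := by
  constructor
  · rintro ⟨e, he, hc⟩
    -- `v = c • e` with `c x = ⟪e, v x⟫`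
    set c : V2 → ℝ := fun y => (innerSL ℝ e) (v y) with hcdef
    have hvc : ∀ y, v y = c y • e := by
      intro y
      obtain ⟨c', hc'⟩ := hc y
      have : c y = c' := by
        simp only [hcdef, hc', innerSL_apply_apply, inner_smul_right]
        rw [real_inner_self_eq_norm_mul_norm, he]
        ring
      rw [this, hc']
    have hcd : Differentiable ℝ c := fun y =>
      ((innerSL ℝ e).differentiableAt).comp y (hv.differentiable one_ne_zero y)
    -- p has zero derivative everywhere
    have hgrad : ∀ x, fderiv ℝ p x = 0 := by
      intro x
      set d := fderiv ℝ c x with hd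
      have hveq : v = fun y => c y • e := funext hvc
      have hfderiv : fderiv ℝ v x = (fderiv ℝ c x).smulRight e := by
        rw [hveq]; exact fderiv_smul_const (hcd x) e
      have hpdv : ∀ i : Fin 2, pdv i v x = (d (EuclideanSpace.single i 1)) • e := by
        intro i; rw [pdv, hfderiv]; rfl
      -- divergence gives `d e = 0`
      have hdiv : d e = 0 := by
        have h2 := h.2 x
        rw [hpdv 0, hpdv 1] at h2
        have : d (EuclideanSpace.single (0:Fin 2) (1:ℝ)) * e 0
            + d (EuclideanSpace.single (1:Fin 2) (1:ℝ)) * e 1 = 0 := by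
          simpa using h2
        calc d e = d ((e 0) • (EuclideanSpace.single (0:Fin 2) (1:ℝ))
              + (e 1) • EuclideanSpace.single 1 1) := by rw [two_decomp]
          _ = e 0 * d (EuclideanSpace.single (0:Fin 2) (1:ℝ))
              + e 1 * d (EuclideanSpace.single (1:Fin 2) (1:ℝ)) := by
                rw [map_add, d.map_smul, d.map_smul]; rfl
          _ = 0 := by linarith [this]
      -- momentum equation gives `gradient p x = 0`
      have hmom := h.1 x
      have hA : (v x 0) • pdv 0 v x + (v x 1) • pdv 1 v x = fderiv ℝ v x (v x) :=
        (fderiv_apply_decomp v x (v x)).symm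
      have hfv : fderiv ℝ v x (v x) = 0 := by
        rw [hfderiv]
        show (d (v x)) • e = 0
        rw [hvc x, d.map_smul, hdiv, smul_zero, zero_smul]
      rw [hA, hfv, zero_add] at hmom
      have : fderiv ℝ p x = (InnerProductSpace.toDual ℝ V2) (gradient p x) :=
        ((InnerProductSpace.toDual ℝ V2).apply_symm_apply _).symm
      rw [this, hmom, map_zero]
    exact ⟨p 0, fun x =>
      is_const_of_fderiv_eq_zero (𝕜 := ℝ) (hp.differentiable one_ne_zero) hgrad x 0⟩
  · rintro ⟨c0, hc0⟩
    -- constant pressure: the transport term vanishes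
    have hgrad : ∀ x, gradient p x = 0 := by
      intro x
      have : p = fun _ => c0 := funext hc0
      rw [this]; exact gradient_const x c0
    have hA : ∀ x, fderiv ℝ v x (v x) = 0 := by
      intro x
      have hmom := h.1 x
      rw [hgrad x, add_zero] at hmom
      rw [fderiv_apply_decomp]; exact hmom
    by_cases hz : ∀ x, v x = 0
    · refine ⟨EuclideanSpace.single 0 1, by simp, fun x => ⟨0, by simp [hz x]⟩⟩
    · push_neg at hz
      obtain ⟨x₀, hx₀⟩ := hz
      refine ⟨‖v x₀‖⁻¹ • v x₀, ?_, ?_⟩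
      · rw [norm_smul, norm_inv, norm_norm,
          inv_mul_cancel₀ (norm_ne_zero_iff.2 hx₀)]
      · intro x
        by_contra hcx
        push_neg at hcx
        -- `v x` and `v x₀` are linearly independent
        have hli : LinearIndependent ℝ ![v x, v x₀] := by
          rw [linearIndependent_fin2]
          refine ⟨by simpa using hx₀, fun a ha => ?_⟩
          apply hcx (a * ‖v x₀‖)
          rw [← (by simpa using ha : a • v x₀ = v x), smul_smul]
          congr 1
          rw [mul_assoc, mul_inv_cancel₀ (norm_ne_zero_iff.2 hx₀), mul_one]
        have hspan : Submodule.span ℝ (Set.range ![v x, v x₀]) = ⊤ :=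
          hli.span_eq_top_of_card_eq_finrank (by simp [finrank_euclideanSpace_fin])
        have hmem : x₀ - x ∈ Submodule.span ℝ ({v x, v x₀} : Set V2) := by
          have : Set.range ![v x, v x₀] = ({v x, v x₀} : Set V2) := by
            simp [Matrix.range_cons, Matrix.range_empty, Set.pair_comm]
          rw [← this, hspan]; trivial
        obtain ⟨a, b, hab⟩ := Submodule.mem_span_pair.1 hmem
        -- the two lines through `x` and `x₀` meet at `z`
        set z := x + a • v x with hzdef
        have hz1 : v z = v x := line_const v hv hA x a
        have hz2 : z = x₀ + (-b) • v x₀ := by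
          have : a • v x = (x₀ - x) - b • v x₀ := by rw [← hab]; abel
          rw [hzdef, this]; module
        have hz3 : v z = v x₀ := by rw [hz2]; exact line_const v hv hA x₀ (-b)
        exact hcx ‖v x₀‖ (by
          rw [← hz1, hz3, smul_smul, mul_inv_cancel₀ (norm_ne_zero_iff.2 hx₀), one_smul])
end
end

section
/- The vector field v(x1, x2) = (-cosh(x1), x2 sinh(x1)) together with the pressure p(x1, x2) = -cosh(2x1)/4 + x2²/2 solves the steady incompressible Euler equations v·∇v + ∇p = 0, div v = 0 in R^2; moreover |v(x)| ≥ 1 for all x ∈ R^2, but v is unbounded. -/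
open Real Set Filter MeasureTheory

noncomputable section

namespace Stmt3Aux

open RealInnerProductSpace

/-- coordinate projection as a CLM -/
def pr (i : Fin 2) : V2 →L[ℝ] ℝ := EuclideanSpace.proj i

/-- basis vector -/
def ee (i : Fin 2) : V2 := EuclideanSpace.single i 1

@[simp] lemma mk2_app0 (a b : ℝ) : mk2 a b 0 = a := rfl
@[simp] lemma mk2_app1 (a b : ℝ) : mk2 a b 1 = b := rfl

lemma hpr (i : Fin 2) (x : V2) : HasFDerivAt (fun y : V2 => y i) (pr i) x :=
  (pr i).hasFDerivAt

/-- the velocity field -/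
def vf : V2 → V2 := fun x => mk2 (-Real.cosh (x 0)) (x 1 * Real.sinh (x 0))

/-- the pressure -/
def pf : V2 → ℝ := fun x => -Real.cosh (2 * x 0) / 4 + (x 1) ^ 2 / 2

lemma gradient_coord (p : V2 → ℝ) (x : V2) (i : Fin 2) :
    gradient p x i = fderiv ℝ p x (ee i) := by
  have h : ⟪gradient p x, ee i⟫ = fderiv ℝ p x (ee i) := by
    rw [gradient]; exact InnerProductSpace.toDual_symm_apply
  rw [← h, ee, EuclideanSpace.inner_single_right]
  simp

lemma grad_pf (x : V2) (i : Fin 2) :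
    gradient pf x i = (if (0:Fin 2) = i then -Real.sinh (2 * x 0)/2 else 0)
        + (if (1:Fin 2) = i then x 1 else 0) := by
  rw [gradient_coord]
  have h1 : HasFDerivAt (fun y : V2 => 2 * y 0) ((2:ℝ) • pr 0) x := (hpr 0 x).const_mul 2
  have h2 := (Real.hasDerivAt_cosh (2 * x 0)).comp_hasFDerivAt x h1
  have h := (h2.neg.const_mul (1/4:ℝ)).add (((hpr 1 x).mul (hpr 1 x)).const_mul (1/2:ℝ))
  have hfun : pf = (fun y : V2 => 1/4 * (-(Real.cosh ∘ fun y : V2 => 2 * y 0) y)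
      + 1/2 * (y 1 * y 1)) := by
    funext y; simp [pf, Function.comp]; ring
  rw [hfun, (show HasFDerivAt (fun y : V2 => 1/4 * (-(Real.cosh ∘ fun y : V2 => 2 * y 0) y)
      + 1/2 * (y 1 * y 1)) _ x from h).fderiv]
  simp [pr, ee, EuclideanSpace.single_apply]
  fin_cases i <;> simp <;> ring

lemma hv0 (x : V2) : HasFDerivAt (fun y : V2 => -Real.cosh (y 0))
    (-(Real.sinh (x 0) • pr 0)) x :=
  by have := ((Real.hasDerivAt_cosh (x 0)).comp_hasFDerivAt x (hpr 0 x)).neg; exact this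

lemma hv1 (x : V2) : HasFDerivAt (fun y : V2 => y 1 * Real.sinh (y 0))
    ((x 1) • (Real.cosh (x 0) • pr 0) + Real.sinh (x 0) • pr 1) x :=
  by have h0 := (Real.hasDerivAt_sinh (x 0)).comp_hasFDerivAt x (hpr 0 x); exact (hpr 1 x).mul h0

lemma vf_diff (x : V2) : DifferentiableAt ℝ vf x := by
  have hw : DifferentiableAt ℝ
      (fun y : V2 => ![-Real.cosh (y 0), y 1 * Real.sinh (y 0)] : V2 → Fin 2 → ℝ) x := by
    rw [differentiableAt_pi]
    intro i
    fin_cases i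
    · simpa using (hv0 x).differentiableAt
    · simpa using (hv1 x).differentiableAt
  exact ((EuclideanSpace.equiv (Fin 2) ℝ).symm.differentiableAt).comp x hw

lemma fderiv_coord (v : V2 → V2) (x : V2) (hv : DifferentiableAt ℝ v x) (j : Fin 2) (u : V2) :
    fderiv ℝ v x u j = fderiv ℝ (fun y => v y j) x u := by
  have h := ((pr j).hasFDerivAt.comp x hv.hasFDerivAt).fderiv
  rw [show (fun y => v y j) = (⇑(pr j) ∘ v) from rfl, h]; rfl

lemma pdv00 (x : V2) : pdv 0 vf x 0 = -Real.sinh (x 0) := by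
  rw [pdv, show (EuclideanSpace.single (0:Fin 2) (1:ℝ)) = ee 0 from rfl,
    fderiv_coord vf x (vf_diff x),
    show (fun y : V2 => vf y 0) = (fun y : V2 => -Real.cosh (y 0)) from rfl, (hv0 x).fderiv]
  simp [pr, ee, EuclideanSpace.single_apply]

lemma pdv01 (x : V2) : pdv 0 vf x 1 = x 1 * Real.cosh (x 0) := by
  rw [pdv, show (EuclideanSpace.single (0:Fin 2) (1:ℝ)) = ee 0 from rfl,
    fderiv_coord vf x (vf_diff x),
    show (fun y : V2 => vf y 1) = (fun y : V2 => y 1 * Real.sinh (y 0)) from rfl, (hv1 x).fderiv]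
  simp [pr, ee, EuclideanSpace.single_apply]

lemma pdv10 (x : V2) : pdv 1 vf x 0 = 0 := by
  rw [pdv, show (EuclideanSpace.single (1:Fin 2) (1:ℝ)) = ee 1 from rfl,
    fderiv_coord vf x (vf_diff x),
    show (fun y : V2 => vf y 0) = (fun y : V2 => -Real.cosh (y 0)) from rfl, (hv0 x).fderiv]
  simp [pr, ee, EuclideanSpace.single_apply]

lemma pdv11 (x : V2) : pdv 1 vf x 1 = Real.sinh (x 0) := by
  rw [pdv, show (EuclideanSpace.single (1:Fin 2) (1:ℝ)) = ee 1 from rfl,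
    fderiv_coord vf x (vf_diff x),
    show (fun y : V2 => vf y 1) = (fun y : V2 => y 1 * Real.sinh (y 0)) from rfl, (hv1 x).fderiv]
  simp [pr, ee, EuclideanSpace.single_apply]

lemma norm_mk2 (a b : ℝ) : ‖mk2 a b‖ = Real.sqrt (a ^ 2 + b ^ 2) := by
  rw [EuclideanSpace.norm_eq]
  simp [Fin.sum_univ_two, sq_abs]

end Stmt3Aux

open Stmt3Aux
theorem stmt_3 :
    IsEuler (fun x => mk2 (-Real.cosh (x 0)) (x 1 * Real.sinh (x 0)))
      (fun x => -Real.cosh (2 * x 0) / 4 + (x 1) ^ 2 / 2) ∧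
    (∀ x : V2, 1 ≤ ‖mk2 (-Real.cosh (x 0)) (x 1 * Real.sinh (x 0))‖) ∧
    ¬ ∃ C : ℝ, ∀ x : V2, ‖mk2 (-Real.cosh (x 0)) (x 1 * Real.sinh (x 0))‖ ≤ C := by
  refine ⟨⟨?_, ?_⟩, ?_, ?_⟩
  · intro x
    show (vf x 0) • pdv 0 vf x + (vf x 1) • pdv 1 vf x + gradient pf x = 0
    apply PiLp.ext
    rw [Fin.forall_fin_two]
    constructor
    · simp only [PiLp.add_apply, PiLp.smul_apply, smul_eq_mul, PiLp.zero_apply,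
        pdv00 x, pdv10 x, grad_pf x 0]
      simp only [vf, mk2_app0, mk2_app1]
      simp
      linear_combination (-(1:ℝ)/2) * Real.sinh_two_mul (x 0)
    · simp only [PiLp.add_apply, PiLp.smul_apply, smul_eq_mul, PiLp.zero_apply,
        pdv01 x, pdv11 x, grad_pf x 1]
      simp only [vf, mk2_app0, mk2_app1]
      simp
      linear_combination (-(x 1)) * Real.cosh_sq (x 0)
  · intro x
    show pdv 0 vf x 0 + pdv 1 vf x 1 = 0
    rw [pdv00 x, pdv11 x]; ring
  · intro x
    rw [norm_mk2]
    have h1 : (1:ℝ) ≤ (-Real.cosh (x 0)) ^ 2 + (x 1 * Real.sinh (x 0)) ^ 2 := by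
      nlinarith [Real.one_le_cosh (x 0), sq_nonneg (x 1 * Real.sinh (x 0))]
    calc (1:ℝ) = Real.sqrt 1 := (Real.sqrt_one).symm
      _ ≤ _ := Real.sqrt_le_sqrt h1
  · rintro ⟨C, hC⟩
    set t : ℝ := 2 * |C| + 2 with ht
    have hx := hC (mk2 t 0)
    rw [show ((mk2 t 0 : V2) 0) = t from rfl, show ((mk2 t 0 : V2) 1) = (0:ℝ) from rfl,
      norm_mk2] at hx
    have h2 : Real.sqrt ((-Real.cosh t) ^ 2 + (0 * Real.sinh t) ^ 2) = Real.cosh t := by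
      rw [show (-Real.cosh t) ^ 2 + (0 * Real.sinh t) ^ 2 = (Real.cosh t)^2 by ring,
        Real.sqrt_sq (Real.cosh_pos t).le]
    rw [h2] at hx
    have h3 : (t + 1) / 2 ≤ Real.cosh t := by
      have := Real.add_one_le_exp t
      have he : Real.exp t ≤ 2 * Real.cosh t := by
        rw [Real.cosh_eq]; nlinarith [Real.exp_pos (-t)]
      linarith
    have : C < (t + 1)/2 := by
      have := abs_nonneg C
      have := le_abs_self C
      rw [ht]; linarith
    linarith
end
end

section
/- Let u : R^2 → R be a C^3 function with ∇u nowhere vanishing, satisfying Δu + f(u) = 0 in R^2 for some C^1 function f : R → R, and let φ be a C^2 argument of ∇u (i.e., ∇u/|∇u| = (cos φ, sin φ)). Then div(|∇u|² ∇φ) = 0 in R^2. -/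
open Real Set Filter MeasureTheory

noncomputable section

lemma contDiff_pd {n m : WithTop ℕ∞} {g : V2 → ℝ} (hg : ContDiff ℝ m g) (h : n + 1 ≤ m) (i : Fin 2) :
    ContDiff ℝ n (pd i g) :=
  (hg.fderiv_right h).clm_apply contDiff_const

lemma grad_apply {g : V2 → ℝ} (x : V2) (i : Fin 2) : gradient g x i = pd i g x := by
  have h1 : (inner ℝ (gradient g x) (EuclideanSpace.single i (1:ℝ)) : ℝ)
      = fderiv ℝ g x (EuclideanSpace.single i 1) := by
    rw [gradient]
    exact InnerProductSpace.toDual_symm_apply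
  rw [EuclideanSpace.inner_single_right] at h1
  simpa [pd] using h1

lemma norm_sq_grad {g : V2 → ℝ} (x : V2) : ‖gradient g x‖^2 = pd 0 g x ^2 + pd 1 g x ^2 := by
  rw [EuclideanSpace.norm_eq, Real.sq_sqrt (by positivity)]
  simp [Fin.sum_univ_two, grad_apply, sq_abs]

lemma pd_comm {g : V2 → ℝ} (hg : ContDiff ℝ 2 g) (i j : Fin 2) (x : V2) :
    pd i (pd j g) x = pd j (pd i g) x := by
  have h1 : ∀ y, HasFDerivAt g (fderiv ℝ g y) y := fun y =>
    ((hg.differentiable (by norm_num)) y).hasFDerivAt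
  have h2 : DifferentiableAt ℝ (fderiv ℝ g) x :=
    ((hg.fderiv_right (m := 1) le_rfl).differentiable (by norm_num)) x
  have hsymm := second_derivative_symmetric h1 h2.hasFDerivAt
    (EuclideanSpace.single i 1) (EuclideanSpace.single j 1)
  have key : ∀ v w : V2, fderiv ℝ (fun y => fderiv ℝ g y v) x w
      = fderiv ℝ (fderiv ℝ g) x w v := by
    intro v w
    rw [fderiv_clm_apply h2 (differentiableAt_const v)]
    simp
  unfold pd
  rw [key, key, hsymm]

lemma pd_mul {c d : V2 → ℝ} {x : V2} (hc : DifferentiableAt ℝ c x)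
    (hd : DifferentiableAt ℝ d x) (i : Fin 2) :
    pd i (fun y => c y * d y) x = c x * pd i d x + d x * pd i c x := by
  unfold pd
  rw [fderiv_fun_mul hc hd]
  simp

lemma pd_sub {c d : V2 → ℝ} {x : V2} (hc : DifferentiableAt ℝ c x)
    (hd : DifferentiableAt ℝ d x) (i : Fin 2) :
    pd i (fun y => c y - d y) x = pd i c x - pd i d x := by
  unfold pd
  rw [fderiv_fun_sub hc hd]
  simp

lemma pd_add {c d : V2 → ℝ} {x : V2} (hc : DifferentiableAt ℝ c x)
    (hd : DifferentiableAt ℝ d x) (i : Fin 2) :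
    pd i (fun y => c y + d y) x = pd i c x + pd i d x := by
  unfold pd
  rw [fderiv_fun_add hc hd]
  simp

lemma pd_zero_fn {g : V2 → ℝ} (h : ∀ y, g y = 0) (i : Fin 2) (x : V2) : pd i g x = 0 := by
  have : g = fun _ => 0 := funext h
  unfold pd
  rw [this, fderiv_fun_const]
  simp

lemma pd_sin {ψ : V2 → ℝ} {x : V2} (hψ : DifferentiableAt ℝ ψ x) (i : Fin 2) :
    pd i (fun y => Real.sin (ψ y)) x = Real.cos (ψ x) * pd i ψ x := by
  unfold pd
  have := ((Real.hasDerivAt_sin (ψ x)).comp_hasFDerivAt x hψ.hasFDerivAt).fderiv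
  rw [show (fun y => Real.sin (ψ y)) = Real.sin ∘ ψ from rfl, this]; simp [mul_comm]

lemma pd_cos {ψ : V2 → ℝ} {x : V2} (hψ : DifferentiableAt ℝ ψ x) (i : Fin 2) :
    pd i (fun y => Real.cos (ψ y)) x = -Real.sin (ψ x) * pd i ψ x := by
  unfold pd
  have := ((Real.hasDerivAt_cos (ψ x)).comp_hasFDerivAt x hψ.hasFDerivAt).fderiv
  rw [show (fun y => Real.cos (ψ y)) = Real.cos ∘ ψ from rfl, this]; simp [mul_comm]

lemma pd_comp_f {f : ℝ → ℝ} {g : V2 → ℝ} {x : V2} (hf : DifferentiableAt ℝ f (g x))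
    (hg : DifferentiableAt ℝ g x) (i : Fin 2) :
    pd i (fun y => f (g y)) x = deriv f (g x) * pd i g x := by
  unfold pd
  have := (hf.hasDerivAt.comp_hasFDerivAt x hg.hasFDerivAt).fderiv
  rw [show (fun y => f (g y)) = f ∘ g from rfl, this]; simp [mul_comm]

theorem stmt_9 (u : V2 → ℝ) (hu : ContDiff ℝ 3 u) (hnz : ∀ x, gradient u x ≠ 0)
    (f : ℝ → ℝ) (hf : ContDiff ℝ 1 f)
    (heq : ∀ x, pd 0 (pd 0 u) x + pd 1 (pd 1 u) x + f (u x) = 0)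
    (φ : V2 → ℝ) (hφ : ContDiff ℝ 2 φ)
    (harg : ∀ x, pd 0 u x = ‖gradient u x‖ * Real.cos (φ x) ∧
                 pd 1 u x = ‖gradient u x‖ * Real.sin (φ x)) :
    ∀ x, pd 0 (fun y => ‖gradient u y‖ ^ 2 * pd 0 φ y) x
       + pd 1 (fun y => ‖gradient u y‖ ^ 2 * pd 1 φ y) x = 0 := by
  -- differentiability facts
  have hu1 : ∀ i : Fin 2, ContDiff ℝ 2 (pd i u) := fun i => contDiff_pd hu (by norm_num) i
  have hu2 : ∀ i j : Fin 2, ContDiff ℝ 1 (pd i (pd j u)) := fun i j =>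
    contDiff_pd (hu1 j) (by norm_num) i
  have du1 : ∀ (i : Fin 2) y, DifferentiableAt ℝ (pd i u) y := fun i y =>
    ((hu1 i).differentiable (by norm_num)) y
  have du2 : ∀ (i j : Fin 2) y, DifferentiableAt ℝ (pd i (pd j u)) y := fun i j y =>
    ((hu2 i j).differentiable (by norm_num)) y
  have dφ : ∀ y, DifferentiableAt ℝ φ y := fun y => (hφ.differentiable (by norm_num)) y
  have dsin : ∀ y, DifferentiableAt ℝ (fun z => Real.sin (φ z)) y := fun y =>
    (Real.differentiable_sin.comp (hφ.differentiable (by norm_num))) y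
  have dcos : ∀ y, DifferentiableAt ℝ (fun z => Real.cos (φ z)) y := fun y =>
    (Real.differentiable_cos.comp (hφ.differentiable (by norm_num))) y
  -- Step A: ρ² ∂ᵢφ = u₁ ∂ᵢu₂ - u₂ ∂ᵢu₁
  have key : ∀ (i : Fin 2) y, ‖gradient u y‖^2 * pd i φ y
      = pd 0 u y * pd i (pd 1 u) y - pd 1 u y * pd i (pd 0 u) y := by
    intro i y
    obtain ⟨hc, hs⟩ := harg y
    have hg0 : ∀ z, pd 0 u z * Real.sin (φ z) - pd 1 u z * Real.cos (φ z) = 0 := by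
      intro z
      obtain ⟨h1, h2⟩ := harg z
      rw [h1, h2]; ring
    have hz : pd i (fun z => pd 0 u z * Real.sin (φ z) - pd 1 u z * Real.cos (φ z)) y = 0 :=
      pd_zero_fn hg0 i y
    rw [pd_sub ((du1 0 y).fun_mul (dsin y)) ((du1 1 y).fun_mul (dcos y)),
        pd_mul (du1 0 y) (dsin y), pd_mul (du1 1 y) (dcos y),
        pd_sin (dφ y), pd_cos (dφ y)] at hz
    have hsc := Real.sin_sq_add_cos_sq (φ y)
    rw [hc, hs] at hz ⊢
    linear_combination (‖gradient u y‖) * hz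
      + (-(‖gradient u y‖^2) * pd i φ y) * hsc
  have hfun : ∀ i : Fin 2, (fun y => ‖gradient u y‖ ^ 2 * pd i φ y)
      = (fun y => pd 0 u y * pd i (pd 1 u) y - pd 1 u y * pd i (pd 0 u) y) := fun i =>
    funext (key i)
  -- Step C: differentiated PDE
  have pde : ∀ (j : Fin 2) y,
      pd j (pd 0 (pd 0 u)) y + pd j (pd 1 (pd 1 u)) y + deriv f (u y) * pd j u y = 0 := by
    intro j y
    have hz : pd j (fun z => pd 0 (pd 0 u) z + pd 1 (pd 1 u) z + f (u z)) y = 0 :=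
      pd_zero_fn heq j y
    have dfu : DifferentiableAt ℝ (fun z => f (u z)) y :=
      ((hf.differentiable (by norm_num)).comp (hu.differentiable (by norm_num))) y
    rw [pd_add (((du2 0 0 y)).fun_add (du2 1 1 y)) dfu,
        pd_add (du2 0 0 y) (du2 1 1 y),
        pd_comp_f ((hf.differentiable (by norm_num)) (u y)) ((hu.differentiable (by norm_num)) y)] at hz
    linarith [hz]
  -- Step D: Clairaut
  have swap3 : ∀ (j i : Fin 2) y, pd j (pd i (pd i u)) y = pd i (pd i (pd j u)) y := by
    intro j i y
    have h1 : pd j (pd i (pd i u)) y = pd i (pd j (pd i u)) y := pd_comm (hu1 i) j i y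
    have h2 : pd j (pd i u) = pd i (pd j u) :=
      funext fun z => pd_comm (hu.of_le (by norm_num)) j i z
    rw [h1, h2]
  have lap : ∀ (j : Fin 2) y,
      pd 0 (pd 0 (pd j u)) y + pd 1 (pd 1 (pd j u)) y = -(deriv f (u y) * pd j u y) := by
    intro j y
    have h := pde j y
    rw [swap3 j 0 y, swap3 j 1 y] at h
    linarith
  -- Final computation
  intro x
  rw [hfun 0, hfun 1]
  have expand : ∀ j : Fin 2,
      pd j (fun y => pd 0 u y * pd j (pd 1 u) y - pd 1 u y * pd j (pd 0 u) y) x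
      = (pd 0 u x * pd j (pd j (pd 1 u)) x + pd j (pd 1 u) x * pd j (pd 0 u) x)
        - (pd 1 u x * pd j (pd j (pd 0 u)) x + pd j (pd 0 u) x * pd j (pd 1 u) x) := by
    intro j
    rw [pd_sub ((du1 0 x).fun_mul (du2 j 1 x)) ((du1 1 x).fun_mul (du2 j 0 x)),
        pd_mul (du1 0 x) (du2 j 1 x), pd_mul (du1 1 x) (du2 j 0 x)]
  rw [expand 0, expand 1]
  have l0 := lap 0 x
  have l1 := lap 1 x
  linear_combination (pd 0 u x) * l1 - (pd 1 u x) * l0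
end
end

section
/- Let u : R^2 → R be C^2 with η ≤ |∇u(x)| ≤ η^{-1} for all x (0 < η ≤ 1), let w = ∇^⊥u, and let φ be a C^1 argument of w (w/|w| = (cos φ, sin φ)). Fix a point x0 with osc_{B(x0,1)} φ < π/2. If σ is a gradient trajectory (σ' = ∇u(σ)) and τ1 < τ2 < τ3 ≤ τ4 are real numbers with σ(τ1) = x0, σ(τ1) ∈ (σ(τ2), σ(τ3)) (open segment), and |σ(τ1) - σ(τ4)| < η^4, then a contradiction follows; i.e., no such quadruple (τ1, τ2, τ3, τ4) exists. -/
open Real Set Filter MeasureTheory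

noncomputable section

theorem stmt_17 (u : V2 → ℝ) (hu : ContDiff ℝ 2 u) (η : ℝ) (hη0 : 0 < η) (hη1 : η ≤ 1)
    (hgrad : ∀ x, η ≤ ‖gradient u x‖ ∧ ‖gradient u x‖ ≤ η⁻¹)
    (φ : V2 → ℝ) (hφ : ContDiff ℝ 1 φ)
    (harg : ∀ x, -(gradient u x 1) = ‖gradient u x‖ * Real.cos (φ x) ∧
                 gradient u x 0 = ‖gradient u x‖ * Real.sin (φ x))
    (x0 : V2)
    (hosc : sSup (φ '' Metric.ball x0 1) - sInf (φ '' Metric.ball x0 1) < Real.pi / 2)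
    (σ : ℝ → V2) (hσ : ∀ t, HasDerivAt σ (gradient u (σ t)) t)
    (τ1 τ2 τ3 τ4 : ℝ) (h12 : τ1 < τ2) (h23 : τ2 < τ3) (h34 : τ3 ≤ τ4)
    (hx0 : σ τ1 = x0) (hseg : σ τ1 ∈ openSegment ℝ (σ τ2) (σ τ3))
    (hclose : ‖σ τ1 - σ τ4‖ < η ^ 4) :
    False := by
  have hηinv : (0:ℝ) < η⁻¹ := by positivity
  have hdu : ∀ x, DifferentiableAt ℝ u x :=
    fun x => (hu.differentiable (by norm_num)).differentiableAt
  have hfd : ∀ x, HasFDerivAt u ((InnerProductSpace.toDual ℝ V2) (gradient u x)) x :=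
    fun x => hasGradientAt_iff_hasFDerivAt.mp (hdu x).hasGradientAt
  -- derivative of u ∘ σ
  have huσ : ∀ t, HasDerivAt (fun t => u (σ t)) (‖gradient u (σ t)‖ ^ 2) t := by
    intro t
    have h := (hfd (σ t)).comp_hasDerivAt t (hσ t)
    rw [InnerProductSpace.toDual_apply_apply, real_inner_self_eq_norm_sq] at h
    exact h
  -- lower MVT : u (σ t) - η^2 * t is monotone
  have haux : ∀ t, HasDerivAt (fun t => u (σ t) - η ^ 2 * t)
      (‖gradient u (σ t)‖ ^ 2 - η ^ 2) t := by
    intro t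
    exact ((huσ t).sub ((hasDerivAt_id t).const_mul (η ^ 2))).congr_deriv (by ring)
  have hmono : Monotone (fun t => u (σ t) - η ^ 2 * t) := by
    apply monotone_of_deriv_nonneg (fun t => (haux t).differentiableAt)
    intro t
    rw [(haux t).deriv]
    have := pow_le_pow_left₀ hη0.le (hgrad (σ t)).1 2
    linarith
  have h14 : τ1 < τ4 := h12.trans (h23.trans_le h34)
  have hlow : η ^ 2 * (τ4 - τ1) ≤ u (σ τ4) - u (σ τ1) := by
    have := hmono h14.le
    simp only at this
    linarith
  -- Lipschitz bound for u
  have hfdnorm : ∀ x, ‖fderiv ℝ u x‖ ≤ η⁻¹ := by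
    intro x
    rw [(hfd x).fderiv, LinearIsometryEquiv.norm_map]
    exact (hgrad x).2
  have hulip : ‖u (σ τ4) - u (σ τ1)‖ ≤ η⁻¹ * ‖σ τ4 - σ τ1‖ :=
    convex_univ.norm_image_sub_le_of_norm_fderiv_le (fun x _ => hdu x)
      (fun x _ => hfdnorm x) (mem_univ _) (mem_univ _)
  -- conclude τ4 - τ1 < η
  have hdist : ‖σ τ4 - σ τ1‖ < η ^ 4 := by rwa [norm_sub_rev] at hclose
  have htdiff : η ^ 2 * (τ4 - τ1) < η ^ 3 := by
    have h1 : u (σ τ4) - u (σ τ1) ≤ η⁻¹ * ‖σ τ4 - σ τ1‖ :=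
      (le_abs_self _).trans (by simpa [Real.norm_eq_abs] using hulip)
    have h2 : η⁻¹ * ‖σ τ4 - σ τ1‖ < η⁻¹ * η ^ 4 :=
      (mul_lt_mul_of_pos_left hdist hηinv)
    have h3 : η⁻¹ * η ^ 4 = η ^ 3 := by field_simp
    linarith
  have hτη : τ4 - τ1 < η := by
    nlinarith [pow_pos hη0 2, pow_pos hη0 3]
  -- σ stays in the unit ball on [τ1, τ4]
  have hσlip : ∀ t ∈ Icc τ1 τ4, ‖σ t - σ τ1‖ ≤ η⁻¹ * (t - τ1) := by
    apply norm_image_sub_le_of_norm_deriv_le_segment'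
      (f' := fun t => gradient u (σ t))
    · exact fun t _ => (hσ t).hasDerivWithinAt
    · exact fun t _ => (hgrad (σ t)).2
  have hball : ∀ t ∈ Icc τ1 τ4, σ t ∈ Metric.ball x0 1 := by
    intro t ht
    have h1 := hσlip t ht
    have h2 : η⁻¹ * (t - τ1) ≤ η⁻¹ * (τ4 - τ1) :=
      mul_le_mul_of_nonneg_left (by linarith [ht.2]) hηinv.le
    have h3 : η⁻¹ * (τ4 - τ1) < η⁻¹ * η := mul_lt_mul_of_pos_left hτη hηinv
    have h4 : η⁻¹ * η = 1 := inv_mul_cancel₀ hη0.ne'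
    rw [Metric.mem_ball, dist_eq_norm, ← hx0]
    linarith
  -- oscillation control
  have hBdd : BddAbove (φ '' Metric.ball x0 1) ∧ BddBelow (φ '' Metric.ball x0 1) := by
    have hc : IsCompact (φ '' Metric.closedBall x0 1) :=
      ((isCompact_closedBall x0 1).image hφ.continuous)
    exact ⟨hc.bddAbove.mono (image_mono Metric.ball_subset_closedBall),
      hc.bddBelow.mono (image_mono Metric.ball_subset_closedBall)⟩
  have hx0mem : x0 ∈ Metric.ball x0 1 := Metric.mem_ball_self one_pos
  have hoscpt : ∀ x ∈ Metric.ball x0 1, φ x - φ x0 < Real.pi / 2 ∧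
      φ x0 - φ x < Real.pi / 2 := by
    intro x hx
    constructor
    · have h1 : φ x ≤ sSup (φ '' Metric.ball x0 1) := le_csSup hBdd.1 ⟨x, hx, rfl⟩
      have h2 : sInf (φ '' Metric.ball x0 1) ≤ φ x0 := csInf_le hBdd.2 ⟨x0, hx0mem, rfl⟩
      linarith
    · have h1 : φ x0 ≤ sSup (φ '' Metric.ball x0 1) := le_csSup hBdd.1 ⟨x0, hx0mem, rfl⟩
      have h2 : sInf (φ '' Metric.ball x0 1) ≤ φ x := csInf_le hBdd.2 ⟨x, hx, rfl⟩
      linarith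
  -- the direction e
  set e : V2 := mk2 (Real.sin (φ x0)) (-Real.cos (φ x0)) with he
  have he0 : e 0 = Real.sin (φ x0) := rfl
  have he1 : e 1 = -Real.cos (φ x0) := rfl
  have hinner : ∀ x, (inner ℝ (gradient u x) e : ℝ) =
      ‖gradient u x‖ * Real.cos (φ x - φ x0) := by
    intro x
    have hs := (harg x).2
    have hc : gradient u x 1 = -(‖gradient u x‖ * Real.cos (φ x)) := by
      linarith [(harg x).1]
    rw [PiLp.inner_apply, Fin.sum_univ_two]
    simp only [RCLike.inner_apply, starRingEnd_apply, star_trivial, he0, he1, hs, hc,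
      Real.cos_sub]
    ring
  -- positivity of inner on the ball
  have hinnerpos : ∀ x ∈ Metric.ball x0 1, (0:ℝ) < inner ℝ (gradient u x) e := by
    intro x hx
    rw [hinner x]
    apply mul_pos (lt_of_lt_of_le hη0 (hgrad x).1)
    apply Real.cos_pos_of_mem_Ioo
    constructor
    · linarith [(hoscpt x hx).2]
    · exact (hoscpt x hx).1
  -- the function g
  set g : ℝ → ℝ := fun t => inner ℝ (σ t) e with hg
  have hgderiv : ∀ t, HasDerivAt g (inner ℝ (gradient u (σ t)) e : ℝ) t := by
    intro t
    have h := ((innerSL ℝ e).hasFDerivAt (x := σ t)).comp_hasDerivAt t (hσ t)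
    simpa [hg, Function.comp_def, mul_comm, real_inner_comm] using h
  have hgmono : StrictMonoOn g (Icc τ1 τ4) := by
    apply strictMonoOn_of_deriv_pos (convex_Icc τ1 τ4)
    · exact fun t _ => (hgderiv t).continuousAt.continuousWithinAt
    · intro t ht
      rw [interior_Icc] at ht
      rw [(hgderiv t).deriv]
      exact hinnerpos (σ t) (hball t (Ioo_subset_Icc_self ht))
  have ht1 : τ1 ∈ Icc τ1 τ4 := ⟨le_refl _, h14.le⟩
  have ht2 : τ2 ∈ Icc τ1 τ4 := ⟨h12.le, (h23.trans_le h34).le⟩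
  have ht3 : τ3 ∈ Icc τ1 τ4 := ⟨(h12.trans h23).le, h34⟩
  have hg12 : g τ1 < g τ2 := hgmono ht1 ht2 h12
  have hg23 : g τ2 < g τ3 := hgmono ht2 ht3 h23
  -- the segment condition
  obtain ⟨a, b, ha, hb, hab, habe⟩ := hseg
  have hgseg : g τ1 = a * g τ2 + b * g τ3 := by
    rw [hg]
    simp only [← habe]
    rw [inner_add_left, real_inner_smul_left, real_inner_smul_left]
  have h1 : b * g τ2 < b * g τ3 := mul_lt_mul_of_pos_left hg23 hb
  have h2 : a * g τ2 + b * g τ2 = g τ2 := by rw [← add_mul, hab, one_mul]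
  linarith
end
end
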